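/- arXiv:2604.03923 — 4 statements merged into one kernel-verified Lean document; each statement's English description precedes it below -/
import Mathlib

section
/- Let A be an n×n Hermitian positive-definite matrix with largest eigenvalue λmax, let σ ≥ 0 be real, and let b, x be vectors in ℂⁿ. Then ‖A(σI + A)⁻¹ b − A x‖₂ ≤ (1/(1 + σ/λmax)) · ‖b − (σI + A) x‖₂. -/
open Matrix
open scoped ComplexOrder

lemma aux_bound {n : ℕ} (M : Matrix (Fin n) (Fin n) ℂ)
    (bb : OrthonormalBasis (Fin n) ℂ (EuclideanSpace ℂ (Fin n)))
    (μ : Fin n → ℂ) (h : ∀ i, Matrix.toEuclideanLin M (bb i) = μ i • bb i)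
    (c : ℝ) (hc : 0 ≤ c) (hμ : ∀ i, ‖μ i‖ ≤ c) (v : EuclideanSpace ℂ (Fin n)) :
    ‖Matrix.toEuclideanLin M v‖ ≤ c * ‖v‖ := by
  set T := Matrix.toEuclideanLin M with hT
  have hv : T v = ∑ i, (μ i * bb.repr v i) • bb i := by
    conv_lhs => rw [← bb.sum_repr v]
    rw [map_sum]
    congr 1; ext i
    rw [_root_.map_smul, h i, smul_smul, mul_comm]
  have hrepr : ∀ j, bb.repr (T v) j = μ j * bb.repr v j := by
    intro j
    rw [hv, map_sum]
    have : ∀ i, bb.repr ((μ i * bb.repr v i) • bb i) = (μ i * bb.repr v i) • EuclideanSpace.single i (1:ℂ) := by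
      intro i; rw [_root_.map_smul, bb.repr_self]
    simp_rw [this]
    rw [WithLp.ofLp_sum, Finset.sum_apply]
    simp [EuclideanSpace.single_apply]
  have h1 : ‖T v‖ = Real.sqrt (∑ j, ‖μ j * bb.repr v j‖^2) := by
    rw [← bb.repr.norm_map (T v), EuclideanSpace.norm_eq]
    exact congrArg Real.sqrt (Finset.sum_congr rfl fun j _ => by rw [hrepr j])
  have h2 : ‖v‖ = Real.sqrt (∑ j, ‖bb.repr v j‖^2) := by
    rw [← bb.repr.norm_map v, EuclideanSpace.norm_eq]
  rw [h1, h2]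
  have : ∑ j, ‖μ j * bb.repr v j‖^2 ≤ c^2 * ∑ j, ‖bb.repr v j‖^2 := by
    rw [Finset.mul_sum]
    apply Finset.sum_le_sum
    intro j _
    rw [norm_mul, mul_pow]
    apply mul_le_mul_of_nonneg_right _ (by positivity)
    exact pow_le_pow_left₀ (norm_nonneg _) (hμ j) 2
  calc Real.sqrt (∑ j, ‖μ j * bb.repr v j‖^2) ≤ Real.sqrt (c^2 * ∑ j, ‖bb.repr v j‖^2) :=
        Real.sqrt_le_sqrt this
    _ = c * Real.sqrt (∑ j, ‖bb.repr v j‖^2) := by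
        rw [Real.sqrt_mul (by positivity), Real.sqrt_sq hc]

lemma toEuclideanLin_mul' {n : ℕ} (M N : Matrix (Fin n) (Fin n) ℂ) (x : EuclideanSpace ℂ (Fin n)) :
    Matrix.toEuclideanLin (M * N) x = Matrix.toEuclideanLin M (Matrix.toEuclideanLin N x) := by
  simp [Matrix.toEuclideanLin_apply, mulVec_mulVec]

theorem stmt0 {n : ℕ} (A : Matrix (Fin n) (Fin n) ℂ) (hA : A.PosDef)
    (lammax : ℝ)
    (hmax : ∀ i, hA.isHermitian.eigenvalues i ≤ lammax)
    (hmem : ∃ i, hA.isHermitian.eigenvalues i = lammax)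
    (σ : ℝ) (hσ : 0 ≤ σ) (b x : EuclideanSpace ℂ (Fin n)) :
    ‖Matrix.toEuclideanLin (A * ((σ : ℂ) • (1 : Matrix (Fin n) (Fin n) ℂ) + A)⁻¹) b
        - Matrix.toEuclideanLin A x‖ ≤
      (1 / (1 + σ / lammax)) *
        ‖b - Matrix.toEuclideanLin ((σ : ℂ) • (1 : Matrix (Fin n) (Fin n) ℂ) + A) x‖ := by
  set H := hA.isHermitian with hH
  set B := (σ:ℂ) • (1 : Matrix (Fin n) (Fin n) ℂ) + A with hBdef
  set V : Fin n → (Fin n → ℂ) := fun i => (WithLp.equiv 2 _) (H.eigenvectorBasis i) with hV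
  set lam : Fin n → ℝ := fun i => H.eigenvalues i with hlam
  have hApos : ∀ i, 0 < lam i := hA.eigenvalues_pos
  obtain ⟨i0, hi0⟩ := hmem
  have hlmax : 0 < lammax := hi0 ▸ hApos i0
  have h1 : ∀ i, A *ᵥ V i = ((lam i : ℂ)) • V i := by
    intro i
    rw [hV]
    have := H.mulVec_eigenvectorBasis i
    simp only [WithLp.equiv_apply, this]
    ext j
    simp [Complex.real_smul, hlam]
  have hc : ∀ i, ((σ + lam i : ℝ) : ℂ) ≠ 0 := by
    intro i
    simp only [ne_eq, Complex.ofReal_eq_zero]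
    have := hApos i; positivity
  have h2 : ∀ i, B *ᵥ V i = ((σ + lam i : ℝ) : ℂ) • V i := by
    intro i
    rw [hBdef, add_mulVec, smul_mulVec, one_mulVec, h1]
    ext j
    push_cast
    simp [Pi.smul_apply, smul_eq_mul]
    ring
  have hBpd : B.PosDef := by
    rw [hBdef, add_comm]
    refine hA.add_posSemidef ?_
    refine posSemidef_iff_dotProduct_mulVec.mpr ⟨?_, ?_⟩
    · unfold Matrix.IsHermitian
      rw [conjTranspose_smul, conjTranspose_one]
      congr 1
      simp [Complex.star_def, Complex.conj_ofReal]
    · intro y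
      simp only [smul_mulVec, one_mulVec, dotProduct_smul]
      have hh1 : (0:ℂ) ≤ (σ:ℂ) := by exact_mod_cast Complex.zero_le_real.mpr hσ
      exact mul_nonneg hh1 (dotProduct_star_self_nonneg y)
  have hBu : IsUnit B.det := isUnit_iff_ne_zero.mpr hBpd.det_pos.ne'
  have h3 : ∀ i, B⁻¹ *ᵥ V i = ((σ + lam i : ℝ) : ℂ)⁻¹ • V i := by
    intro i
    have := congrArg (fun w => B⁻¹ *ᵥ w) (h2 i)
    simp only [mulVec_smul] at this
    rw [mulVec_mulVec, nonsing_inv_mul B hBu, one_mulVec] at this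
    conv_rhs => rw [this]
    rw [smul_smul, inv_mul_cancel₀ (hc i), one_smul]
  have h4 : ∀ i, (A * B⁻¹) *ᵥ V i = ((lam i / (σ + lam i) : ℝ) : ℂ) • V i := by
    intro i
    rw [← mulVec_mulVec, h3, mulVec_smul, h1, smul_smul]
    congr 1
    push_cast
    rw [mul_comm]
    rfl
  -- rewrite goal
  set μ : Fin n → ℂ := fun i => ((lam i / (σ + lam i) : ℝ) : ℂ) with hμdef
  set c : ℝ := 1 / (1 + σ / lammax) with hcdef
  have hceq : c = lammax / (lammax + σ) := by
    rw [hcdef]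
    rw [show (1 : ℝ) + σ / lammax = (lammax + σ) / lammax by field_simp]
    rw [one_div_div]
  have hcnn : 0 ≤ c := by rw [hceq]; positivity
  have hμle : ∀ i, ‖μ i‖ ≤ c := by
    intro i
    rw [hμdef, Complex.norm_real, Real.norm_eq_abs, abs_of_nonneg (by have := hApos i; positivity), hceq]
    rw [div_le_div_iff₀ (by have := hApos i; positivity) (by positivity)]
    have hmi := hmax i
    have := hApos i
    nlinarith
  have heig : ∀ i, Matrix.toEuclideanLin (A * B⁻¹) (H.eigenvectorBasis i) = μ i • H.eigenvectorBasis i := by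
    intro i
    rw [Matrix.toEuclideanLin_apply]
    have : (A * B⁻¹) *ᵥ (WithLp.equiv 2 (Fin n → ℂ)) (H.eigenvectorBasis i) = μ i • V i := h4 i
    erw [this]
    ext j
    simp [hV]
  have hgoal : Matrix.toEuclideanLin (A * B⁻¹) b - Matrix.toEuclideanLin A x
      = Matrix.toEuclideanLin (A * B⁻¹) (b - Matrix.toEuclideanLin B x) := by
    rw [map_sub, ← toEuclideanLin_mul', mul_assoc, nonsing_inv_mul B hBu, mul_one]
  rw [hgoal]
  exact aux_bound (A * B⁻¹) H.eigenvectorBasis μ heig c hcnn hμle _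
end

section
/- Let A be an n×n Hermitian positive-definite matrix with largest eigenvalue λmax, let 0 < α < 1, and for k = 1,…,m let tₖ ≥ 0 be quadrature nodes with weights wₖ > 0. Define gₖ = (sin(απ)/(απ)) wₖ A (tₖ^{1/α} I + A)⁻¹ b and, for approximate solutions x̃ₖ of (tₖ^{1/α} I + A) x = b with residuals rₖ = b − (tₖ^{1/α} I + A) x̃ₖ, define g̃ₖ = (sin(απ)/(απ)) wₖ A x̃ₖ. If for every k, ‖rₖ‖₂ ≤ (ε/(2m)) · (απ/sin(απ)) · (1 + tₖ^{1/α}/λmax)/wₖ, then ‖∑ₖ gₖ − ∑ₖ g̃ₖ‖₂ ≤ ε/2. -/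
open Matrix
open scoped ComplexOrder

lemma norm_le_of_psd {n : ℕ} (M : Matrix (Fin n) (Fin n) ℂ) (hM : M.IsHermitian)
    (c : ℝ) (hc : 0 ≤ c)
    (hpsd : (((c^2 : ℝ) : ℂ) • (1 : Matrix (Fin n) (Fin n) ℂ) - M * M).PosSemidef)
    (v : EuclideanSpace ℂ (Fin n)) :
    ‖Matrix.toEuclideanLin M v‖ ≤ c * ‖v‖ := by
  set x : Fin n → ℂ := WithLp.equiv 2 _ v with hx
  have h1 : ‖Matrix.toEuclideanLin M v‖^2
      = Complex.re (dotProduct (star x) ((M * M) *ᵥ x)) := by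
    rw [← @inner_self_eq_norm_sq ℂ, EuclideanSpace.inner_eq_star_dotProduct]
    rw [dotProduct_comm, piLp_ofLp_toEuclideanLin, Matrix.toLin'_apply]
    rw [star_mulVec, ← dotProduct_mulVec, hM.eq, mulVec_mulVec]
    rfl
  have h2 : 0 ≤ Complex.re (dotProduct (star x)
      ((((c^2 : ℝ) : ℂ) • (1 : Matrix (Fin n) (Fin n) ℂ) - M * M) *ᵥ x)) := by
    have := hpsd.dotProduct_mulVec_nonneg x
    exact (RCLike.nonneg_iff.mp this).1
  have h3 : Complex.re (dotProduct (star x) ((M * M) *ᵥ x)) ≤ c^2 * ‖v‖^2 := by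
    rw [sub_mulVec, dotProduct_sub, Complex.sub_re] at h2
    have hv : Complex.re (dotProduct (star x) ((((c^2 : ℝ) : ℂ) • (1 : Matrix (Fin n) (Fin n) ℂ)) *ᵥ x))
        = c^2 * ‖v‖^2 := by
      rw [smul_mulVec, one_mulVec, dotProduct_smul]
      have : dotProduct (star x) x = (‖v‖^2 : ℝ) := by
        rw [dotProduct_comm, ← EuclideanSpace.inner_eq_star_dotProduct, @inner_self_eq_norm_sq_to_K ℂ]
        norm_num
      rw [this]
      simp [Complex.ofReal_mul, ← Complex.ofReal_pow]
    linarith [h2, hv.le, hv.ge]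
  have hn : ‖Matrix.toEuclideanLin M v‖^2 ≤ (c * ‖v‖)^2 := by
    rw [h1]; calc _ ≤ c^2 * ‖v‖^2 := h3
    _ = (c * ‖v‖)^2 := by ring
  nlinarith [norm_nonneg (Matrix.toEuclideanLin M v), norm_nonneg v, mul_nonneg hc (norm_nonneg v)]

lemma key {n : ℕ} (A : Matrix (Fin n) (Fin n) ℂ) (hA : A.PosDef) (lammax τ : ℝ)
    (hmax : ∀ i, hA.isHermitian.eigenvalues i ≤ lammax) (hlam : 0 < lammax) (hτ : 0 ≤ τ)
    (v : EuclideanSpace ℂ (Fin n)) :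
    ‖Matrix.toEuclideanLin (A * ((τ : ℂ) • (1 : Matrix (Fin n) (Fin n) ℂ) + A)⁻¹) v‖ ≤
      (lammax / (τ + lammax)) * ‖v‖ := by
  set eig := hA.isHermitian.eigenvalues with heig
  set U : Matrix (Fin n) (Fin n) ℂ := (hA.isHermitian.eigenvectorUnitary : Matrix (Fin n) (Fin n) ℂ) with hU
  have hUU : U * star U = 1 := mem_unitaryGroup_iff.mp hA.isHermitian.eigenvectorUnitary.2
  have hsUU : star U * U = 1 := mem_unitaryGroup_iff'.mp hA.isHermitian.eigenvectorUnitary.2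
  have hd : ∀ i, 0 < τ + eig i := fun i => add_pos_of_nonneg_of_pos hτ (hA.eigenvalues_pos i)
  have hsp : A = U * diagonal (fun i => ((eig i : ℝ) : ℂ)) * star U := by
    have h := hA.isHermitian.spectral_theorem
    rw [Unitary.conjStarAlgAut_apply] at h
    exact h
  have hT : (τ : ℂ) • (1 : Matrix (Fin n) (Fin n) ℂ) + A
      = U * diagonal (fun i => ((τ + eig i : ℝ) : ℂ)) * star U := by
    have : diagonal (fun i => ((τ + eig i : ℝ) : ℂ)) = (τ : ℂ) • 1 + diagonal (fun i => ((eig i : ℝ) : ℂ)) := by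
      have hfun : (fun i => ((τ + eig i : ℝ) : ℂ)) = fun i => (τ : ℂ) + ((eig i : ℝ) : ℂ) := by
        funext i; push_cast; ring
      rw [hfun, ← diagonal_add, smul_one_eq_diagonal]
    rw [this, Matrix.mul_add, Matrix.add_mul, ← hsp]
    congr 1
    rw [Matrix.mul_smul, Matrix.smul_mul, Matrix.mul_one, hUU]
  have hTinv : ((τ : ℂ) • (1 : Matrix (Fin n) (Fin n) ℂ) + A)⁻¹
      = U * diagonal (fun i => (((τ + eig i)⁻¹ : ℝ) : ℂ)) * star U := by
    apply inv_eq_right_inv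
    rw [hT]
    calc (U * diagonal (fun i => ((τ + eig i : ℝ) : ℂ)) * star U) * (U * diagonal (fun i => (((τ + eig i)⁻¹ : ℝ) : ℂ)) * star U)
        = U * (diagonal (fun i => ((τ + eig i : ℝ) : ℂ)) * (star U * U) * diagonal (fun i => (((τ + eig i)⁻¹ : ℝ) : ℂ))) * star U := by
          simp only [Matrix.mul_assoc]
      _ = 1 := by
          rw [hsUU, Matrix.mul_one, diagonal_mul_diagonal]
          have : (fun i => ((τ + eig i : ℝ) : ℂ) * (((τ + eig i)⁻¹ : ℝ) : ℂ)) = fun _ => (1 : ℂ) := by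
            funext i
            rw [← Complex.ofReal_mul, mul_inv_cancel₀ (hd i).ne']
            norm_num
          rw [this, diagonal_one, Matrix.mul_one, hUU]
  set g : Fin n → ℝ := fun i => eig i / (τ + eig i) with hg
  have hM : A * ((τ : ℂ) • (1 : Matrix (Fin n) (Fin n) ℂ) + A)⁻¹
      = U * diagonal (fun i => ((g i : ℝ) : ℂ)) * star U := by
    rw [hTinv]
    conv_lhs => rw [hsp]
    calc (U * diagonal (fun i => ((eig i : ℝ) : ℂ)) * star U) * (U * diagonal (fun i => (((τ + eig i)⁻¹ : ℝ) : ℂ)) * star U)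
        = U * (diagonal (fun i => ((eig i : ℝ) : ℂ)) * (star U * U) * diagonal (fun i => (((τ + eig i)⁻¹ : ℝ) : ℂ))) * star U := by
          simp only [Matrix.mul_assoc]
      _ = U * diagonal (fun i => ((g i : ℝ) : ℂ)) * star U := by
          rw [hsUU, Matrix.mul_one, diagonal_mul_diagonal]
          have hfun : (fun i => ((eig i : ℝ) : ℂ) * (((τ + eig i)⁻¹ : ℝ) : ℂ)) = fun i => ((g i : ℝ) : ℂ) := by
            funext i; rw [← Complex.ofReal_mul, hg]; norm_num [div_eq_mul_inv]
          rw [hfun]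
  set c : ℝ := lammax / (τ + lammax) with hc
  have hcpos : 0 < c := div_pos hlam (by linarith)
  have hgle : ∀ i, g i ≤ c := by
    intro i
    rw [hg, hc, div_le_div_iff₀ (hd i) (by linarith)]
    have h1 := hmax i
    have h2 := (hA.eigenvalues_pos i)
    nlinarith
  have hgpos : ∀ i, 0 < g i := fun i => div_pos (hA.eigenvalues_pos i) (hd i)
  have hMherm : (A * ((τ : ℂ) • (1 : Matrix (Fin n) (Fin n) ℂ) + A)⁻¹).IsHermitian := by
    rw [hM, Matrix.star_eq_conjTranspose]
    apply isHermitian_mul_mul_conjTranspose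
    apply isHermitian_diagonal_of_self_adjoint
    funext i
    simp [Complex.conj_ofReal]
  apply norm_le_of_psd _ hMherm _ hcpos.le
  have hMM : (A * ((τ : ℂ) • (1 : Matrix (Fin n) (Fin n) ℂ) + A)⁻¹) * (A * ((τ : ℂ) • (1 : Matrix (Fin n) (Fin n) ℂ) + A)⁻¹)
      = U * diagonal (fun i => ((g i * g i : ℝ) : ℂ)) * star U := by
    rw [hM]
    calc (U * diagonal (fun i => ((g i : ℝ) : ℂ)) * star U) * (U * diagonal (fun i => ((g i : ℝ) : ℂ)) * star U)
        = U * (diagonal (fun i => ((g i : ℝ) : ℂ)) * (star U * U) * diagonal (fun i => ((g i : ℝ) : ℂ))) * star U := by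
          simp only [Matrix.mul_assoc]
      _ = U * diagonal (fun i => ((g i * g i : ℝ) : ℂ)) * star U := by
          rw [hsUU, Matrix.mul_one, diagonal_mul_diagonal]
          have hfun : (fun i => ((g i : ℝ) : ℂ) * ((g i : ℝ) : ℂ)) = fun i => ((g i * g i : ℝ) : ℂ) := by
            funext i; push_cast; ring
          rw [hfun]
  rw [hMM]
  have hone : ((c^2 : ℝ) : ℂ) • (1 : Matrix (Fin n) (Fin n) ℂ)
      = U * diagonal (fun _ => ((c^2 : ℝ) : ℂ)) * star U := by
    rw [smul_one_eq_diagonal]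
    have : U * diagonal (fun _ => ((c^2 : ℝ) : ℂ)) = diagonal (fun _ => ((c^2 : ℝ) : ℂ)) * U := by
      rw [← smul_one_eq_diagonal, Matrix.mul_smul, Matrix.smul_mul, Matrix.mul_one, Matrix.one_mul]
    rw [this, Matrix.mul_assoc, hUU, Matrix.mul_one]
  rw [hone, ← Matrix.sub_mul, ← Matrix.mul_sub, diagonal_sub]
  rw [Matrix.star_eq_conjTranspose]
  apply Matrix.PosSemidef.mul_mul_conjTranspose_same
  apply Matrix.PosSemidef.diagonal
  intro i
  simp only [Pi.zero_apply]
  rw [show ((c^2 : ℝ) : ℂ) - ((g i * g i : ℝ) : ℂ) = ((c^2 - g i * g i : ℝ) : ℂ) by push_cast; ring,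
    Complex.zero_le_real]
  nlinarith [hgle i, hgpos i]

lemma psd_real_smul_one {n : ℕ} {τ : ℝ} (h : 0 ≤ τ) :
    (((τ : ℂ)) • (1 : Matrix (Fin n) (Fin n) ℂ)).PosSemidef := by
  rw [smul_one_eq_diagonal]
  refine Matrix.PosSemidef.diagonal ?_
  intro i
  simpa using Complex.zero_le_real.mpr h

lemma toEuc_mul {n : ℕ} (M N : Matrix (Fin n) (Fin n) ℂ) (v : EuclideanSpace ℂ (Fin n)) :
    Matrix.toEuclideanLin (M * N) v = Matrix.toEuclideanLin M (Matrix.toEuclideanLin N v) := by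
  simp [Matrix.toEuclideanLin_apply, mulVec_mulVec]

theorem stmt4 {n m : ℕ} (hm : 1 ≤ m) (A : Matrix (Fin n) (Fin n) ℂ) (hA : A.PosDef)
    (lammax : ℝ)
    (hmax : ∀ i, hA.isHermitian.eigenvalues i ≤ lammax)
    (hmem : ∃ i, hA.isHermitian.eigenvalues i = lammax)
    (α : ℝ) (hα : 0 < α) (hα1 : α < 1)
    (t w : Fin m → ℝ) (ht : ∀ k, 0 ≤ t k) (hw : ∀ k, 0 < w k)
    (b : EuclideanSpace ℂ (Fin n)) (x' : Fin m → EuclideanSpace ℂ (Fin n))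
    (ε : ℝ) (hε : 0 < ε)
    (hres : ∀ k, ‖b - Matrix.toEuclideanLin
        (((t k ^ (1/α) : ℝ) : ℂ) • (1 : Matrix (Fin n) (Fin n) ℂ) + A) (x' k)‖ ≤
      (ε / (2 * m)) * ((α * Real.pi) / Real.sin (α * Real.pi)) *
        ((1 + t k ^ (1/α) / lammax) / w k)) :
    ‖(∑ k, (Real.sin (α * Real.pi) / (α * Real.pi) * w k) •
          Matrix.toEuclideanLin
            (A * (((t k ^ (1/α) : ℝ) : ℂ) • (1 : Matrix (Fin n) (Fin n) ℂ) + A)⁻¹) b)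
        - ∑ k, (Real.sin (α * Real.pi) / (α * Real.pi) * w k) •
            Matrix.toEuclideanLin A (x' k)‖ ≤ ε / 2 := by
  obtain ⟨i₀, hi₀⟩ := hmem
  have hlam : 0 < lammax := hi₀ ▸ hA.eigenvalues_pos i₀
  have hπ : 0 < α * Real.pi := mul_pos hα Real.pi_pos
  have hsin : 0 < Real.sin (α * Real.pi) :=
    Real.sin_pos_of_pos_of_lt_pi hπ (by nlinarith [Real.pi_pos])
  set s : ℝ := Real.sin (α * Real.pi) / (α * Real.pi) with hs
  have hspos : 0 < s := div_pos hsin hπ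
  have hmR : (0 : ℝ) < m := by exact_mod_cast hm
  -- per-term bound
  have hterm : ∀ k : Fin m,
      ‖(s * w k) • Matrix.toEuclideanLin
          (A * (((t k ^ (1/α) : ℝ) : ℂ) • (1 : Matrix (Fin n) (Fin n) ℂ) + A)⁻¹) b
        - (s * w k) • Matrix.toEuclideanLin A (x' k)‖ ≤ ε / (2 * m) := by
    intro k
    set τ : ℝ := t k ^ (1/α) with hτdef
    have hτ : 0 ≤ τ := Real.rpow_nonneg (ht k) _
    set T : Matrix (Fin n) (Fin n) ℂ := ((τ : ℝ) : ℂ) • 1 + A with hT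
    have hTpd : T.PosDef := Matrix.PosDef.posSemidef_add (psd_real_smul_one hτ) hA
    have hdet : IsUnit T.det := hTpd.det_pos.ne'.isUnit
    have hMT : A * T⁻¹ * T = A := by
      rw [Matrix.mul_assoc, Matrix.nonsing_inv_mul _ hdet, Matrix.mul_one]
    have hAx : Matrix.toEuclideanLin A (x' k)
        = Matrix.toEuclideanLin (A * T⁻¹) (Matrix.toEuclideanLin T (x' k)) := by
      rw [← toEuc_mul, hMT]
    have hdiff : (s * w k) • Matrix.toEuclideanLin (A * T⁻¹) b
          - (s * w k) • Matrix.toEuclideanLin A (x' k)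
        = (s * w k) • Matrix.toEuclideanLin (A * T⁻¹)
            (b - Matrix.toEuclideanLin T (x' k)) := by
      rw [hAx, ← smul_sub, map_sub]
    rw [hdiff, norm_smul, Real.norm_of_nonneg (mul_nonneg hspos.le (hw k).le)]
    have hkey := key A hA lammax τ hmax hlam hτ (b - Matrix.toEuclideanLin T (x' k))
    have hR := hres k
    set c : ℝ := lammax / (τ + lammax) with hc
    have hcpos : 0 < c := div_pos hlam (by linarith)
    calc (s * w k) * ‖Matrix.toEuclideanLin (A * T⁻¹) (b - Matrix.toEuclideanLin T (x' k))‖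
        ≤ (s * w k) * (c * ‖b - Matrix.toEuclideanLin T (x' k)‖) := by
          apply mul_le_mul_of_nonneg_left hkey (mul_nonneg hspos.le (hw k).le)
      _ ≤ (s * w k) * (c * ((ε / (2 * m)) * ((α * Real.pi) / Real.sin (α * Real.pi)) *
            ((1 + τ / lammax) / w k))) := by
          apply mul_le_mul_of_nonneg_left _ (mul_nonneg hspos.le (hw k).le)
          exact mul_le_mul_of_nonneg_left hR hcpos.le
      _ = ε / (2 * m) := by
          rw [hs, hc]
          have h1 : τ + lammax ≠ 0 := by positivity
          have h2 : Real.sin (α * Real.pi) ≠ 0 := hsin.ne'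
          have h3 : α * Real.pi ≠ 0 := hπ.ne'
          have h4 : w k ≠ 0 := (hw k).ne'
          have h5 : lammax ≠ 0 := hlam.ne'
          field_simp
          ring
  -- sum it up
  rw [← Finset.sum_sub_distrib]
  calc ‖∑ k, ((s * w k) • Matrix.toEuclideanLin
          (A * (((t k ^ (1/α) : ℝ) : ℂ) • (1 : Matrix (Fin n) (Fin n) ℂ) + A)⁻¹) b
        - (s * w k) • Matrix.toEuclideanLin A (x' k))‖
      ≤ ∑ k : Fin m, (ε / (2 * m)) := norm_sum_le_of_le _ (fun k _ => hterm k)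
    _ = ε / 2 := by
        rw [Finset.sum_const, Finset.card_univ, Fintype.card_fin, nsmul_eq_mul]
        field_simp
end

section
/- Let A be an n×n Hermitian positive-definite matrix with largest eigenvalue λmax, 0 < α < 1, t ≥ 0, w > 0, and b, x̃ ∈ ℂⁿ with residual r = b − (t^{1/α} I + A) x̃. Then ‖(sin(απ)/(απ)) w A (t^{1/α} I + A)⁻¹ b − (sin(απ)/(απ)) w A x̃‖₂ ≤ (sin(απ)/(απ)) · w · ‖r‖₂ / (1 + t^{1/α}/λmax). -/
open Matrix
open scoped ComplexOrder

lemma aux_posdef {n : ℕ} (A : Matrix (Fin n) (Fin n) ℂ) (hA : A.PosDef)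
    {s : ℝ} (hs : 0 ≤ s) : ((s : ℂ) • (1 : Matrix (Fin n) (Fin n) ℂ) + A).PosDef := by
  apply Matrix.PosDef.posSemidef_add _ hA
  rw [smul_one_eq_diagonal]
  exact Matrix.PosSemidef.diagonal (fun i => Complex.zero_le_real.2 hs)

lemma aux_key {n : ℕ} (A : Matrix (Fin n) (Fin n) ℂ) (hA : A.PosDef)
    (lammax : ℝ) (hmax : ∀ i, hA.isHermitian.eigenvalues i ≤ lammax)
    (hlam : 0 < lammax) {s : ℝ} (hs : 0 ≤ s) (r : EuclideanSpace ℂ (Fin n)) :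
    ‖Matrix.toEuclideanLin (A * ((s : ℂ) • (1 : Matrix (Fin n) (Fin n) ℂ) + A)⁻¹) r‖
      ≤ lammax / (lammax + s) * ‖r‖ := by
  set M : Matrix (Fin n) (Fin n) ℂ := (s : ℂ) • 1 + A with hM
  have hMpd : M.PosDef := aux_posdef A hA hs
  set V := hA.isHermitian.eigenvectorBasis with hV
  set lam := hA.isHermitian.eigenvalues with hlamdef
  have hpos : ∀ j, 0 < lam j := fun j => hA.eigenvalues_pos j
  have hsl : ∀ j, 0 < s + lam j := fun j => by linarith [hpos j]
  -- step 1 : M *ᵥ V j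
  have step1 : ∀ j, M *ᵥ ⇑(V j) = ((s + lam j : ℝ) : ℂ) • ⇑(V j) := by
    intro j
    rw [hM, add_mulVec, smul_mulVec, one_mulVec,
      hA.isHermitian.mulVec_eigenvectorBasis,
      RCLike.real_smul_eq_coe_smul (K := ℂ) (lam j)]
    push_cast
    rw [add_smul]
    rfl
  -- step 2 : (A * M⁻¹) *ᵥ V j
  have step2 : ∀ j, (A * M⁻¹) *ᵥ ⇑(V j) = ((lam j / (s + lam j) : ℝ) : ℂ) • ⇑(V j) := by
    intro j
    have hd : ((s + lam j : ℝ) : ℂ) ≠ 0 := by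
      exact_mod_cast (hsl j).ne'
    have hinv : M⁻¹ *ᵥ ⇑(V j) = ((s + lam j : ℝ) : ℂ)⁻¹ • ⇑(V j) := by
      have h1 : M *ᵥ (((s + lam j : ℝ) : ℂ)⁻¹ • ⇑(V j)) = ⇑(V j) := by
        rw [mulVec_smul, step1 j, smul_smul, inv_mul_cancel₀ hd, one_smul]
      calc M⁻¹ *ᵥ ⇑(V j) = M⁻¹ *ᵥ (M *ᵥ (((s + lam j : ℝ) : ℂ)⁻¹ • ⇑(V j))) := by rw [h1]
        _ = (M⁻¹ * M) *ᵥ (((s + lam j : ℝ) : ℂ)⁻¹ • ⇑(V j)) := by rw [mulVec_mulVec]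
        _ = _ := by rw [Matrix.nonsing_inv_mul M hMpd.det_pos.ne'.isUnit, one_mulVec]
    rw [← mulVec_mulVec, hinv, mulVec_smul, hA.isHermitian.mulVec_eigenvectorBasis,
      RCLike.real_smul_eq_coe_smul (K := ℂ) (lam j), smul_smul]
    congr 1
    push_cast
    field_simp
    rfl
  -- step 3 : toEuclideanLin on basis vectors
  set B : Matrix (Fin n) (Fin n) ℂ := A * M⁻¹ with hB
  have step3 : ∀ j, Matrix.toEuclideanLin B (V j)
      = ((lam j / (s + lam j) : ℝ) : ℂ) • V j := by
    intro j
    rw [Matrix.toEuclideanLin_apply, step2 j]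
    rfl
  have expand : Matrix.toEuclideanLin B r
      = ∑ j, (V.repr r j * ((lam j / (s + lam j) : ℝ) : ℂ)) • V j := by
    conv_lhs => rw [← V.sum_repr r, map_sum]
    refine Finset.sum_congr rfl fun j _ => ?_
    rw [_root_.map_smul, step3 j, smul_smul, mul_comm]
  have hrepr : ∀ i, V.repr (Matrix.toEuclideanLin B r) i
      = V.repr r i * ((lam i / (s + lam i) : ℝ) : ℂ) := by
    intro i
    rw [V.repr_apply_apply, expand]
    exact V.orthonormal.inner_right_fintype _ i
  set K := lammax / (lammax + s) with hK
  have hKnn : 0 ≤ K := le_of_lt (div_pos hlam (by linarith))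
  have hmu : ∀ i, lam i / (s + lam i) ≤ K := by
    intro i
    rw [hK, div_le_div_iff₀ (hsl i) (by linarith)]
    nlinarith [hmax i, hpos i, hsl i]
  have hmunn : ∀ i, 0 ≤ lam i / (s + lam i) :=
    fun i => le_of_lt (div_pos (hpos i) (hsl i))
  have h1 : ‖Matrix.toEuclideanLin B r‖
      = Real.sqrt (∑ i, (‖V.repr r i‖ * (lam i / (s + lam i))) ^ 2) := by
    rw [← LinearIsometryEquiv.norm_map V.repr, EuclideanSpace.norm_eq]
    congr 1
    refine Finset.sum_congr rfl fun i _ => ?_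
    rw [hrepr i, norm_mul, Complex.norm_real, Real.norm_eq_abs, abs_of_nonneg (hmunn i)]
  have h2 : ‖r‖ = Real.sqrt (∑ i, ‖V.repr r i‖ ^ 2) := by
    rw [← LinearIsometryEquiv.norm_map V.repr, EuclideanSpace.norm_eq]
  rw [h1, h2, ← Real.sqrt_sq hKnn, ← Real.sqrt_mul (sq_nonneg K)]
  apply Real.sqrt_le_sqrt
  rw [Finset.mul_sum]
  refine Finset.sum_le_sum fun i _ => ?_
  nlinarith [mul_self_le_mul_self (hmunn i) (hmu i), sq_nonneg (‖V.repr r i‖)]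

theorem stmt5 {n : ℕ} (A : Matrix (Fin n) (Fin n) ℂ) (hA : A.PosDef)
    (lammax : ℝ)
    (hmax : ∀ i, hA.isHermitian.eigenvalues i ≤ lammax)
    (hmem : ∃ i, hA.isHermitian.eigenvalues i = lammax)
    (α : ℝ) (hα : 0 < α) (hα1 : α < 1)
    (t w : ℝ) (ht : 0 ≤ t) (hw : 0 < w)
    (b x' : EuclideanSpace ℂ (Fin n)) :
    ‖(Real.sin (α * Real.pi) / (α * Real.pi) * w) •
          Matrix.toEuclideanLin
            (A * (((t ^ (1/α) : ℝ) : ℂ) • (1 : Matrix (Fin n) (Fin n) ℂ) + A)⁻¹) b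
        - (Real.sin (α * Real.pi) / (α * Real.pi) * w) • Matrix.toEuclideanLin A x'‖ ≤
      (Real.sin (α * Real.pi) / (α * Real.pi)) * w *
        ‖b - Matrix.toEuclideanLin
          (((t ^ (1/α) : ℝ) : ℂ) • (1 : Matrix (Fin n) (Fin n) ℂ) + A) x'‖ /
        (1 + t ^ (1/α) / lammax) := by
  obtain ⟨i0, hi0⟩ := hmem
  have hlam : 0 < lammax := hi0 ▸ hA.eigenvalues_pos i0
  set s : ℝ := t ^ (1/α) with hsdef
  have hs : 0 ≤ s := Real.rpow_nonneg ht _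
  set M : Matrix (Fin n) (Fin n) ℂ := (s : ℂ) • 1 + A with hM
  have hMpd : M.PosDef := aux_posdef A hA hs
  have hsin : 0 < Real.sin (α * Real.pi) :=
    Real.sin_pos_of_pos_of_lt_pi (mul_pos hα Real.pi_pos) (by nlinarith [Real.pi_pos])
  have hapi : 0 < α * Real.pi := mul_pos hα Real.pi_pos
  set c : ℝ := Real.sin (α * Real.pi) / (α * Real.pi) * w with hc
  have hcpos : 0 < c := mul_pos (div_pos hsin hapi) hw
  set r : EuclideanSpace ℂ (Fin n) := b - Matrix.toEuclideanLin M x' with hr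
  have hBM : (A * M⁻¹) * M = A := by
    rw [mul_assoc, Matrix.nonsing_inv_mul M hMpd.det_pos.ne'.isUnit, mul_one]
  have hveq : Matrix.toEuclideanLin (A * M⁻¹) b - Matrix.toEuclideanLin A x'
      = Matrix.toEuclideanLin (A * M⁻¹) r := by
    rw [hr, map_sub]
    congr 1
    conv_lhs => rw [← hBM]
    simp [Matrix.toEuclideanLin_apply, mulVec_mulVec]
  rw [← smul_sub, hveq, norm_smul, Real.norm_eq_abs, abs_of_pos hcpos]
  have key := aux_key A hA lammax hmax hlam hs r
  calc c * ‖Matrix.toEuclideanLin (A * M⁻¹) r‖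
      ≤ c * (lammax / (lammax + s) * ‖r‖) := mul_le_mul_of_nonneg_left key hcpos.le
    _ = Real.sin (α * Real.pi) / (α * Real.pi) * w * ‖r‖ / (1 + s / lammax) := by
        have h1 : lammax + s ≠ 0 := by positivity
        rw [hc]
        field_simp
end

section
/- Let A be an n×n Hermitian positive-definite matrix and 0 < α < 1. Then A^α = (sin(απ)/(απ)) · A · ∫₀^∞ (t^{1/α} I + A)⁻¹ dt, where A^α is defined by applying λ ↦ λ^α to the eigenvalues of A in a spectral decomposition. -/
open Matrix MeasureTheory Set Real
open scoped ComplexOrder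

section Aux

lemma exp_neg_mul_integral0 {c : ℝ} (hc : 0 < c) :
    ∫ s in Ioi (0:ℝ), Real.exp (-(c * s)) = c⁻¹ := by
  have h := integral_comp_mul_left_Ioi (fun x => Real.exp (-x)) 0 hc
  simp only [mul_zero, integral_exp_neg_Ioi, neg_zero, Real.exp_zero, smul_eq_mul, mul_one] at h
  simpa using h

lemma beta_core {α : ℝ} (hα : 0 < α) (hα1 : α < 1) :
    IntegrableOn (fun u : ℝ => u ^ (α - 1) / (1 + u)) (Ioi 0) ∧
      ∫ u in Ioi (0:ℝ), u ^ (α - 1) / (1 + u) = Real.pi / Real.sin (Real.pi * α) := by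
  have hmeas : Measurable (fun u : ℝ => u ^ (α - 1) / (1 + u)) := by
    fun_prop
  have hnn : ∀ u ∈ Ioi (0:ℝ), 0 ≤ u ^ (α - 1) / (1 + u) := by
    intro u hu
    exact div_nonneg (rpow_nonneg (le_of_lt hu) _) (by linarith [mem_Ioi.mp hu])
  have hnn' : 0 ≤ᵐ[volume.restrict (Ioi (0:ℝ))] fun u => u ^ (α - 1) / (1 + u) :=
    (ae_restrict_iff' measurableSet_Ioi).mpr (Filter.Eventually.of_forall hnn)
  -- the double function
  set F : ℝ → ℝ → ℝ := fun u s => u ^ (α - 1) * Real.exp (-(1 + u) * s) with hF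
  have hFmeas : AEMeasurable (Function.uncurry fun u s => ENNReal.ofReal (F u s))
      ((volume.restrict (Ioi (0:ℝ))).prod (volume.restrict (Ioi (0:ℝ)))) := by
    apply Measurable.aemeasurable
    apply Measurable.ennreal_ofReal
    fun_prop
  have step1 : ∀ u ∈ Ioi (0:ℝ),
      ENNReal.ofReal (u ^ (α - 1) / (1 + u)) = ∫⁻ s in Ioi (0:ℝ), ENNReal.ofReal (F u s) := by
    intro u hu
    have hu0 : (0:ℝ) < u := hu
    have h1u : (0:ℝ) < 1 + u := by linarith
    have hint : Integrable (fun s => F u s) (volume.restrict (Ioi (0:ℝ))) :=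
      (exp_neg_integrableOn_Ioi 0 h1u).const_mul _
    rw [← ofReal_integral_eq_lintegral_ofReal hint]
    · congr 1
      rw [hF]
      simp only
      rw [integral_const_mul]
      simp_rw [neg_mul]
      rw [exp_neg_mul_integral0 h1u, div_eq_mul_inv]
    · refine (ae_restrict_iff' measurableSet_Ioi).mpr (Filter.Eventually.of_forall fun s _ => ?_)
      exact mul_nonneg (rpow_nonneg hu0.le _) (Real.exp_nonneg _)
  have step2 : ∀ s ∈ Ioi (0:ℝ),
      (∫⁻ u in Ioi (0:ℝ), ENNReal.ofReal (F u s))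
        = ENNReal.ofReal (Real.Gamma α * (Real.exp (-s) * s ^ (-α))) := by
    intro s hs
    have hs0 : (0:ℝ) < s := hs
    have hint : IntegrableOn (fun u : ℝ => u ^ (α - 1) * Real.exp (-s * u ^ (1:ℝ)))
        (Ioi 0) := integrableOn_rpow_mul_exp_neg_mul_rpow (by linarith) one_pos hs0
    have hcong : ∀ u ∈ Ioi (0:ℝ), F u s = Real.exp (-s) * (u ^ (α - 1) * Real.exp (-s * u ^ (1:ℝ))) := by
      intro u hu
      rw [hF]
      simp only [rpow_one]
      rw [show -(1 + u) * s = -s + -s * u by ring, Real.exp_add]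
      ring
    have hint2 : IntegrableOn (fun u => F u s) (Ioi (0:ℝ)) := by
      refine (show IntegrableOn _ (Ioi (0:ℝ)) volume from hint.const_mul (Real.exp (-s))).congr_fun
        (fun u hu => (hcong u hu).symm) measurableSet_Ioi
    rw [← ofReal_integral_eq_lintegral_ofReal hint2]
    · congr 1
      rw [setIntegral_congr_fun measurableSet_Ioi hcong,
        integral_const_mul, integral_rpow_mul_exp_neg_mul_rpow one_pos (by linarith) hs0]
      have : -(α - 1 + 1) / 1 = -α := by ring
      rw [this]
      simp only [sub_add_cancel, one_div, div_one]
      ring_nf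
    · refine (ae_restrict_iff' measurableSet_Ioi).mpr (Filter.Eventually.of_forall fun u hu => ?_)
      exact mul_nonneg (rpow_nonneg (le_of_lt hu) _) (Real.exp_nonneg _)
  have hG : ∫ s in Ioi (0:ℝ), Real.exp (-s) * s ^ (-α) = Real.Gamma (1 - α) := by
    rw [Real.Gamma_eq_integral (by linarith)]
    refine setIntegral_congr_fun measurableSet_Ioi fun s hs => ?_
    norm_num
  have hGint : IntegrableOn (fun s : ℝ => Real.exp (-s) * s ^ (-α)) (Ioi 0) := by
    have := Real.GammaIntegral_convergent (s := 1 - α) (by linarith)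
    refine this.congr_fun (fun s hs => ?_) measurableSet_Ioi
    norm_num
  have key : ∫⁻ u in Ioi (0:ℝ), ENNReal.ofReal (u ^ (α - 1) / (1 + u))
      = ENNReal.ofReal (Real.Gamma α * Real.Gamma (1 - α)) := by
    rw [setLIntegral_congr_fun measurableSet_Ioi step1]
    rw [lintegral_lintegral_swap hFmeas]
    rw [setLIntegral_congr_fun measurableSet_Ioi step2]
    rw [← ofReal_integral_eq_lintegral_ofReal (hGint.const_mul _)]
    · rw [integral_const_mul, hG]
    · refine (ae_restrict_iff' measurableSet_Ioi).mpr (Filter.Eventually.of_forall fun s hs => ?_)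
      exact mul_nonneg (Real.Gamma_pos_of_pos hα).le
        (mul_nonneg (Real.exp_nonneg _) (rpow_nonneg (le_of_lt hs) _))
  have hint : IntegrableOn (fun u : ℝ => u ^ (α - 1) / (1 + u)) (Ioi 0) := by
    refine ⟨hmeas.aestronglyMeasurable, ?_⟩
    rw [hasFiniteIntegral_iff_ofReal hnn', key]
    exact ENNReal.ofReal_lt_top
  refine ⟨hint, ?_⟩
  have hg1 := Real.Gamma_pos_of_pos hα
  have hg2 := Real.Gamma_pos_of_pos (show (0:ℝ) < 1 - α by linarith)
  rw [integral_eq_lintegral_of_nonneg_ae hnn' hmeas.aestronglyMeasurable, key,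
    ENNReal.toReal_ofReal (by positivity), Real.Gamma_mul_Gamma_one_sub]



lemma scalar_integrable {α lam : ℝ} (hα : 0 < α) (hα1 : α < 1) (hlam : 0 < lam) :
    IntegrableOn (fun t : ℝ => (t ^ (1/α) + lam)⁻¹) (Ioi 0) := by
  have hcont : ContinuousOn (fun t : ℝ => (t ^ (1/α) + lam)⁻¹) (Ioi 0) := by
    refine ContinuousOn.inv₀ (ContinuousOn.add ?_ continuousOn_const) ?_
    · exact continuousOn_id.rpow_const fun x hx => Or.inl (ne_of_gt hx)
    · intro x hx
      have := rpow_nonneg (le_of_lt (mem_Ioi.mp hx)) (1/α)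
      positivity
  rw [show Ioi (0:ℝ) = Ioc 0 1 ∪ Ioi 1 by rw [Ioc_union_Ioi_eq_Ioi zero_le_one]]
  rw [integrableOn_union]
  constructor
  · refine Integrable.mono' ((integrableOn_const_iff (C := lam⁻¹)).mpr (Or.inr measure_Ioc_lt_top))
      ((hcont.mono Ioc_subset_Ioi_self).aestronglyMeasurable measurableSet_Ioc) ?_
    refine (ae_restrict_iff' measurableSet_Ioc).mpr (Filter.Eventually.of_forall fun t ht => ?_)
    have h1 : 0 < t ^ (1/α) + lam := by
      have := rpow_nonneg (le_of_lt ht.1) (1/α); positivity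
    rw [norm_inv, Real.norm_eq_abs, abs_of_pos h1]
    rw [inv_le_inv₀ h1 hlam]  -- lam⁻¹ as bound: need ‖f‖ ≤ lam⁻¹ i.e. lam ≤ t^+lam
    · nlinarith [rpow_nonneg (le_of_lt ht.1) (1/α)]
  · have hlt : -(1/α) < -1 := by
      rw [neg_lt_neg_iff]
      rw [lt_div_iff₀ hα]; linarith
    refine Integrable.mono' (integrableOn_Ioi_rpow_of_lt hlt one_pos)
      ((hcont.mono (Ioi_subset_Ioi zero_le_one)).aestronglyMeasurable measurableSet_Ioi) ?_
    refine (ae_restrict_iff' measurableSet_Ioi).mpr (Filter.Eventually.of_forall fun t ht => ?_)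
    have ht1 : (1:ℝ) < t := ht
    have ht0 : (0:ℝ) < t := by linarith
    have h1 : 0 < t ^ (1/α) + lam := by
      have := rpow_nonneg ht0.le (1/α); positivity
    rw [norm_inv, Real.norm_eq_abs, abs_of_pos h1, Real.rpow_neg ht0.le]
    refine inv_anti₀ (rpow_pos_of_pos ht0 _) (by linarith)

lemma scalar_value {α lam : ℝ} (hα : 0 < α) (hα1 : α < 1) (hlam : 0 < lam) :
    ∫ t in Ioi (0:ℝ), (t ^ (1/α) + lam)⁻¹
      = (α * (Real.pi / Real.sin (Real.pi * α))) * lam ^ (α - 1) := by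
  have h1 : ∫ t in Ioi (0:ℝ), (t ^ (1/α) + lam)⁻¹
      = ∫ x in Ioi (0:ℝ), (α * x ^ (α - 1)) • ((x ^ α) ^ (1/α) + lam)⁻¹ :=
    (integral_comp_rpow_Ioi_of_pos hα (g := fun t => (t ^ (1/α) + lam)⁻¹)).symm
  rw [h1]
  have h2 : ∀ x ∈ Ioi (0:ℝ), (α * x ^ (α - 1)) • ((x ^ α) ^ (1/α) + lam)⁻¹
      = α * (x ^ (α - 1) * (x + lam)⁻¹) := by
    intro x hx
    have hx0 : (0:ℝ) < x := hx
    rw [← Real.rpow_mul hx0.le, mul_one_div_cancel (ne_of_gt hα), Real.rpow_one,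
      smul_eq_mul, mul_assoc]
  rw [setIntegral_congr_fun measurableSet_Ioi h2, integral_const_mul]
  have h3 : ∫ x in Ioi (0:ℝ), x ^ (α - 1) * (x + lam)⁻¹
      = lam * ∫ u in Ioi (0:ℝ), (lam * u) ^ (α - 1) * (lam * u + lam)⁻¹ := by
    rw [integral_comp_mul_left_Ioi (fun x => x ^ (α - 1) * (x + lam)⁻¹) 0 hlam]
    rw [mul_zero, smul_eq_mul, ← mul_assoc, mul_inv_cancel₀ (ne_of_gt hlam), one_mul]
  rw [h3]
  have h4 : ∀ u ∈ Ioi (0:ℝ), (lam * u) ^ (α - 1) * (lam * u + lam)⁻¹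
      = (lam ^ (α - 1) * lam⁻¹) * (u ^ (α - 1) / (1 + u)) := by
    intro u hu
    have hu0 : (0:ℝ) < u := hu
    rw [Real.mul_rpow hlam.le hu0.le, show lam * u + lam = lam * (1 + u) by ring,
      mul_inv, div_eq_mul_inv]
    ring
  rw [setIntegral_congr_fun measurableSet_Ioi h4, integral_const_mul,
    (beta_core hα hα1).2]
  rw [show lam * (lam ^ (α - 1) * lam⁻¹ * (π / Real.sin (π * α)))
      = lam ^ (α - 1) * (lam * lam⁻¹) * (π / Real.sin (π * α)) by ring,
    mul_inv_cancel₀ (ne_of_gt hlam), mul_one]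
  ring

end Aux



theorem stmt11 {n : ℕ} (A : Matrix (Fin n) (Fin n) ℂ) (hA : A.PosDef)
    (α : ℝ) (hα : 0 < α) (hα1 : α < 1) :
    (hA.isHermitian.eigenvectorUnitary : Matrix (Fin n) (Fin n) ℂ) *
        Matrix.diagonal (fun i => ((hA.isHermitian.eigenvalues i ^ α : ℝ) : ℂ)) *
        star (hA.isHermitian.eigenvectorUnitary : Matrix (Fin n) (Fin n) ℂ) =
      ((Real.sin (α * Real.pi) / (α * Real.pi) : ℝ) : ℂ) •
        (A * Matrix.of (fun i j =>
          ∫ t in Set.Ioi (0 : ℝ),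
            ((((t ^ (1/α) : ℝ) : ℂ) • (1 : Matrix (Fin n) (Fin n) ℂ) + A)⁻¹) i j)) := by
  classical
  set U : Matrix (Fin n) (Fin n) ℂ := (hA.isHermitian.eigenvectorUnitary : Matrix (Fin n) (Fin n) ℂ) with hU
  set lam : Fin n → ℝ := hA.isHermitian.eigenvalues with hlamdef
  have hU1 : U * star U = 1 := Matrix.mem_unitaryGroup_iff.mp (hA.isHermitian.eigenvectorUnitary).2
  have hU2 : star U * U = 1 := Matrix.mem_unitaryGroup_iff'.mp (hA.isHermitian.eigenvectorUnitary).2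
  have hlam : ∀ k, 0 < lam k := fun k => hA.eigenvalues_pos k
  have hspec : A = U * Matrix.diagonal (fun k => (lam k : ℂ)) * star U :=
    hA.isHermitian.spectral_theorem
  -- conjugation multiplication
  have hdmul : ∀ d e : Fin n → ℂ,
      (U * Matrix.diagonal d * star U) * (U * Matrix.diagonal e * star U)
        = U * Matrix.diagonal (fun k => d k * e k) * star U := by
    intro d e
    calc (U * Matrix.diagonal d * star U) * (U * Matrix.diagonal e * star U)
        = U * Matrix.diagonal d * ((star U * U) * (Matrix.diagonal e * star U)) := by
          simp only [Matrix.mul_assoc]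
      _ = U * Matrix.diagonal d * (Matrix.diagonal e * star U) := by
          rw [hU2, Matrix.one_mul]
      _ = U * (Matrix.diagonal d * Matrix.diagonal e) * star U := by
          simp only [Matrix.mul_assoc]
      _ = U * Matrix.diagonal (fun k => d k * e k) * star U := by
          rw [Matrix.diagonal_mul_diagonal]
  -- inverse formula
  have hinv : ∀ c : ℝ, 0 < c → (((c:ℝ):ℂ) • (1 : Matrix (Fin n) (Fin n) ℂ) + A)⁻¹
      = U * Matrix.diagonal (fun k => (((c + lam k)⁻¹ : ℝ) : ℂ)) * star U := by
    intro c hc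
    have hd : ((c:ℝ):ℂ) • (1 : Matrix (Fin n) (Fin n) ℂ) + A
        = U * Matrix.diagonal (fun k => (((c + lam k) : ℝ) : ℂ)) * star U := by
      have h1 : ((c:ℝ):ℂ) • (1 : Matrix (Fin n) (Fin n) ℂ)
          = U * Matrix.diagonal (fun _ => ((c:ℝ):ℂ)) * star U := by
        rw [show Matrix.diagonal (fun _ : Fin n => ((c:ℝ):ℂ)) = ((c:ℝ):ℂ) • (1 : Matrix (Fin n) (Fin n) ℂ) by
          ext i j; by_cases h : i = j <;> simp [Matrix.diagonal_apply, Matrix.one_apply, h]]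
        rw [Matrix.mul_smul, Matrix.smul_mul, Matrix.mul_one, hU1]
      conv_lhs => rw [h1, hspec]
      rw [← Matrix.add_mul, ← Matrix.mul_add, Matrix.diagonal_add]
      push_cast
      rfl
    rw [hd]
    apply Matrix.inv_eq_right_inv
    rw [hdmul]
    have : (fun k => (((c + lam k) : ℝ) : ℂ) * (((c + lam k)⁻¹ : ℝ) : ℂ)) = fun _ => (1:ℂ) := by
      funext k
      rw [← Complex.ofReal_mul, mul_inv_cancel₀ (ne_of_gt (by have := hlam k; linarith) : (c + lam k) ≠ 0), Complex.ofReal_one]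
    rw [this, Matrix.diagonal_one, Matrix.mul_one, hU1]
  -- entries of conjugated diagonal
  have hentry : ∀ (d : Fin n → ℂ) i j,
      (U * Matrix.diagonal d * star U) i j = ∑ k, U i k * d k * (star U) k j := by
    intro d i j
    rw [Matrix.mul_apply]
    refine Finset.sum_congr rfl fun k _ => ?_
    rw [Matrix.mul_diagonal]
  -- the integral matrix
  set I : Fin n → ℝ := fun k => ∫ t in Ioi (0:ℝ), (t ^ (1/α) + lam k)⁻¹ with hIdef
  have hOf : Matrix.of (fun i j =>
        ∫ t in Set.Ioi (0 : ℝ),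
          ((((t ^ (1/α) : ℝ) : ℂ) • (1 : Matrix (Fin n) (Fin n) ℂ) + A)⁻¹) i j)
      = U * Matrix.diagonal (fun k => ((I k : ℝ) : ℂ)) * star U := by
    ext i j
    rw [Matrix.of_apply]
    have hint : ∀ t ∈ Ioi (0:ℝ),
        ((((t ^ (1/α) : ℝ) : ℂ) • (1 : Matrix (Fin n) (Fin n) ℂ) + A)⁻¹) i j
          = ∑ k, (U i k * (star U) k j) * (((t ^ (1/α) + lam k)⁻¹ : ℝ) : ℂ) := by
      intro t ht
      rw [hinv _ (rpow_pos_of_pos ht _), hentry]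
      exact Finset.sum_congr rfl fun k _ => by ring
    rw [setIntegral_congr_fun measurableSet_Ioi hint]
    rw [integral_finset_sum]
    · rw [hentry]
      refine Finset.sum_congr rfl fun k _ => ?_
      rw [integral_const_mul]
      have hIcast : ∫ t in Ioi (0:ℝ), (((t ^ (1/α) + lam k)⁻¹ : ℝ) : ℂ) = ((I k : ℝ) : ℂ) :=
        integral_ofReal
      rw [hIcast]
      ring
    · intro k _
      exact ((scalar_integrable hα hα1 (hlam k)).ofReal (𝕜 := ℂ)).const_mul _
  rw [hOf]
  conv_rhs => rw [hspec]
  rw [hdmul, ← Matrix.smul_mul, ← Matrix.mul_smul, ← Matrix.diagonal_smul]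
  have hfg : (fun i => ((lam i ^ α : ℝ) : ℂ))
      = (((Real.sin (α * Real.pi) / (α * Real.pi) : ℝ) : ℂ) • fun k => (lam k : ℂ) * ((I k : ℝ) : ℂ)) := by
    funext k
    have hI : I k = α * (Real.pi / Real.sin (Real.pi * α)) * lam k ^ (α - 1) :=
      scalar_value hα hα1 (hlam k)
    have hαπ : 0 < α * Real.pi := by positivity
    have hsin : Real.sin (α * Real.pi) ≠ 0 := by
      refine ne_of_gt (Real.sin_pos_of_pos_of_lt_pi hαπ ?_)
      nlinarith [Real.pi_pos]
    have hl : lam k ^ α = lam k * lam k ^ (α - 1) := by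
      nth_rewrite 1 [show α = 1 + (α - 1) by ring]
      rw [Real.rpow_add (hlam k), Real.rpow_one]
    have hreal : Real.sin (α * Real.pi) / (α * Real.pi) * (lam k * I k) = lam k ^ α := by
      rw [hI, hl, mul_comm Real.pi α]
      field_simp
    simp only [Pi.smul_apply, smul_eq_mul]
    rw [← Complex.ofReal_mul, ← Complex.ofReal_mul, hreal]
  rw [hfg]
end
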